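/- Every nonzero TR function below the maximal one is a regular sequence (Theorem 3.11, converse direction): Let F be a one-dimensional tropical fan in ℝ^n with primitive generators v_1, …, v_q spanning ℝ^n and weights ω_1, …, ω_q. Fix an index i and a nonempty subset J ⊆ {1,…,q} \ {i}, and for each j ∈ J let l_j ∈ (ℤ^n)^∨ be a gallery of F on (i, j). Define M_max(x) = max(0, max_{j ∈ J} l_j(x)). Then every nonnegative TR function M that is not identically zero and satisfies M(x) ≤ M_max(x) for all x ∈ ℝ^n satisfies M(v_i) = 1, M(v_t) = 0 for all t ≠ i, and hence M·F = Σ_t ω_t M(v_t) = 1. -/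
import Mathlib


/-- Integer pairing of a functional `l ∈ (ℤⁿ)^∨` with a vector `x ∈ ℤⁿ`. -/
def dotZ {n : ℕ} (l x : Fin n → ℤ) : ℤ := ∑ j, l j * x j

/-- Value of the nonnegative tropical regular function `max(0, l₁, …, l_k)` at `x ∈ ℤⁿ`. -/
def tropEvalZ {n k : ℕ} (l : Fin k → Fin n → ℤ) (x : Fin n → ℤ) : ℤ :=
  Finset.univ.fold max 0 (fun s => dotZ (l s) x)

/-- A one-dimensional tropical fan in ℝⁿ: pairwise distinct primitive integer vectors
`v i` (the primitive generators of the rays) spanning ℝⁿ, with positive integer weights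
`w i`, subject to the balancing condition `∑ i, w i • v i = 0`. -/
structure TropFan1 (n q : ℕ) where
  v : Fin q → Fin n → ℤ
  w : Fin q → ℤ
  v_inj : Function.Injective v
  v_prim : ∀ i, Finset.univ.gcd (v i) = 1
  w_pos : ∀ i, 0 < w i
  balanced : ∑ i, w i • v i = 0
  spans : Submodule.span ℝ (Set.range fun i => fun j => ((v i j : ℝ))) = ⊤

/-- A gallery of `F` on the pair of distinct indices `(a, b)`. -/
def IsGallery {n q : ℕ} (F : TropFan1 n q) (a b : Fin q) (l : Fin n → ℤ) : Prop :=
  a ≠ b ∧ F.w a = 1 ∧ F.w b = 1 ∧ dotZ l (F.v a) = 1 ∧ dotZ l (F.v b) = -1 ∧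
    ∀ j, j ≠ a → j ≠ b → dotZ l (F.v j) = 0


/-- Value of the nonnegative tropical regular function `max(0, l_1, ..., l_k)` at a real
point `x` of ℝⁿ. -/
def tropEvalR {n k : ℕ} (l : Fin k → Fin n → ℤ) (x : Fin n → ℝ) : ℝ :=
  Finset.univ.fold max 0 (fun s => ∑ j, (l s j : ℝ) * x j)

lemma dot_cast {n : ℕ} (l v : Fin n → ℤ) :
    ∑ s, (l s : ℝ) * (v s : ℝ) = ((dotZ l v : ℤ) : ℝ) := by
  rw [dotZ]; push_cast; ring

lemma trop_nonneg {n k : ℕ} (c : Fin k → Fin n → ℤ) (x : Fin n → ℝ) :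
    0 ≤ tropEvalR c x :=
  (Finset.le_fold_max _).2 (Or.inl le_rfl)

lemma dot_le_trop {n k : ℕ} (c : Fin k → Fin n → ℤ) (x : Fin n → ℝ) (s : Fin k) :
    ∑ j, (c s j : ℝ) * x j ≤ tropEvalR c x :=
  (Finset.le_fold_max _).2 (Or.inr ⟨s, Finset.mem_univ s, le_rfl⟩)

/-- Every nonzero TR function below the maximal one is a regular sequence
(Theorem 3.11, converse direction). -/
theorem below_maximal_is_regular {n q : ℕ} (F : TropFan1 n q) (i : Fin q)
    (J : Finset (Fin q)) (hJ : J.Nonempty) (hiJ : i ∉ J) (l : Fin q → Fin n → ℤ)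
    (hgal : ∀ j ∈ J, IsGallery F i j (l j))
    (M : (Fin n → ℝ) → ℝ) (k : ℕ) (c : Fin k → Fin n → ℤ)
    (hM : ∀ x, M x = tropEvalR c x)
    (hM0 : ∃ x, M x ≠ 0)
    (hle : ∀ x, M x ≤ max 0 (J.sup' hJ fun j => ∑ s, (l j s : ℝ) * x s)) :
    M (fun j => (F.v i j : ℝ)) = 1 ∧
      (∀ t, t ≠ i → M (fun j => (F.v t j : ℝ)) = 0) ∧
      ∑ t, (F.w t : ℝ) * M (fun j => (F.v t j : ℝ)) = 1 := by
  obtain ⟨j0, hj0⟩ := hJ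
  obtain ⟨-, hwi, -, -, -, -⟩ := hgal j0 hj0
  -- M vanishes at v t for t ≠ i
  have hMt : ∀ t, t ≠ i → M (fun j => (F.v t j : ℝ)) = 0 := by
    intro t ht
    have h2 : 0 ≤ M (fun j => (F.v t j : ℝ)) := by
      rw [hM]; exact trop_nonneg _ _
    have h1 : M (fun j => (F.v t j : ℝ)) ≤ 0 := by
      have hsup : (J.sup' ⟨j0, hj0⟩ fun j => ∑ s, (l j s : ℝ) * (F.v t s : ℝ)) ≤ 0 := by
        apply Finset.sup'_le
        intro j hj
        obtain ⟨hne, -, -, -, hneg, hzero⟩ := hgal j hj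
        rw [dot_cast]
        by_cases hjt : j = t
        · subst hjt; rw [hneg]; norm_num
        · rw [hzero t ht (Ne.symm hjt)]; norm_num
      have := hle (fun j => (F.v t j : ℝ))
      simpa [hsup, max_eq_left hsup] using this
    linarith
  have hMi : M (fun j => (F.v i j : ℝ)) = 1 := by
    have hub : M (fun j => (F.v i j : ℝ)) ≤ 1 := by
      have hsup : (J.sup' ⟨j0, hj0⟩ fun j => ∑ s, (l j s : ℝ) * (F.v i s : ℝ)) ≤ 1 := by
        apply Finset.sup'_le
        intro j hj
        obtain ⟨-, -, -, hone, -, -⟩ := hgal j hj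
        rw [dot_cast, hone]; norm_num
      have := hle (fun j => (F.v i j : ℝ))
      have : M (fun j => (F.v i j : ℝ)) ≤ max 0 1 := le_trans this (max_le_max le_rfl hsup)
      simpa using this
    have hlb : ∃ s : Fin k, 1 ≤ dotZ (c s) (F.v i) := by
      by_contra hcon
      push_neg at hcon
      -- every c s vanishes on every v t
      have hzero : ∀ s t, dotZ (c s) (F.v t) = 0 := by
        intro s
        have hnonpos : ∀ t, dotZ (c s) (F.v t) ≤ 0 := by
          intro t
          by_cases hti : t = i
          · subst hti; exact Int.lt_add_one_iff.mp (hcon s)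
          · have h1 : ∑ j, (c s j : ℝ) * (F.v t j : ℝ) ≤ M (fun j => (F.v t j : ℝ)) := by
              rw [hM]; exact dot_le_trop _ _ _
            rw [hMt t hti, dot_cast] at h1
            exact_mod_cast h1
        have hsum : ∑ t, F.w t * dotZ (c s) (F.v t) = 0 := by
          have hb : ∀ j, ∑ t, F.w t * F.v t j = 0 := by
            intro j
            have := congrFun F.balanced j
            simpa using this
          calc ∑ t, F.w t * dotZ (c s) (F.v t)
              = ∑ j, c s j * (∑ t, F.w t * F.v t j) := by
                simp only [dotZ, Finset.mul_sum]
                rw [Finset.sum_comm]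
                congr 1; ext t; congr 1; ext j; ring
            _ = 0 := by simp [hb]
        have := (Finset.sum_eq_zero_iff_of_nonpos (fun t _ =>
          mul_nonpos_of_nonneg_of_nonpos (le_of_lt (F.w_pos t)) (hnonpos t))).mp hsum
        intro t
        have ht := this t (Finset.mem_univ t)
        rcases mul_eq_zero.mp ht with h | h
        · exact absurd h (ne_of_gt (F.w_pos t))
        · exact h
      -- hence M is identically 0
      obtain ⟨x, hx⟩ := hM0
      apply hx
      rw [hM]
      have hdz : ∀ s : Fin k, ∑ j, (c s j : ℝ) * x j = 0 := by
        intro s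
        let f : (Fin n → ℝ) →ₗ[ℝ] ℝ :=
          { toFun := fun y => ∑ j, (c s j : ℝ) * y j
            map_add' := by
              intro a b
              simp [mul_add, Finset.sum_add_distrib]
            map_smul' := by
              intro r a
              simp [Finset.mul_sum, mul_left_comm] }
        have hker : Submodule.span ℝ (Set.range fun t => fun j => ((F.v t j : ℝ))) ≤
            LinearMap.ker f := by
          rw [Submodule.span_le]
          rintro _ ⟨t, rfl⟩
          simp only [SetLike.mem_coe, LinearMap.mem_ker]
          show (∑ j, (c s j : ℝ) * (F.v t j : ℝ)) = 0
          rw [dot_cast, hzero s t]; norm_num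
        rw [F.spans] at hker
        exact hker (Submodule.mem_top (R := ℝ) (x := x))
      apply le_antisymm
      · rw [tropEvalR, Finset.fold_max_le]
        exact ⟨le_rfl, fun s _ => le_of_eq (hdz s)⟩
      · exact trop_nonneg _ _
    obtain ⟨s, hs⟩ := hlb
    have hge : (1 : ℝ) ≤ M (fun j => (F.v i j : ℝ)) := by
      rw [hM]
      refine le_trans ?_ (dot_le_trop c _ s)
      rw [dot_cast]
      exact_mod_cast hs
    linarith
  refine ⟨hMi, hMt, ?_⟩
  rw [Finset.sum_eq_single i (fun t _ ht => by rw [hMt t ht, mul_zero])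
    (fun h => absurd (Finset.mem_univ i) h), hMi, hwi]
  norm_num
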